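/- Let M_1 ⊕ M_2 = (E, ρ) be the direct sum of q-matroids M_i = (E_i, ρ_i), and set 𝒳 = {X ≤ E : X ≠ 0 and ρ_1(π_1(X)) + ρ_2(π_2(X)) < dim X}. Then the circuits of M_1 ⊕ M_2 are exactly the inclusion-minimal elements of 𝒳. -/
import Mathlib

open Module

/-- The rank function of the direct sum of two q-matroids `(E₁, ρ₁)`, `(E₂, ρ₂)` on the
ground space `E₁ × E₂`, as an integer:
`ρ(V) = dim V + min_{X ≤ V} (ρ₁(π₁(X)) + ρ₂(π₂(X)) − dim X)`. -/
noncomputable def dsRank {Fq E₁ E₂ : Type*} [Field Fq]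
    [AddCommGroup E₁] [Module Fq E₁] [AddCommGroup E₂] [Module Fq E₂]
    (ρ₁ : Submodule Fq E₁ → ℕ) (ρ₂ : Submodule Fq E₂ → ℕ)
    (V : Submodule Fq (E₁ × E₂)) : ℤ :=
  (finrank Fq V : ℤ) +
    sInf {z : ℤ | ∃ X : Submodule Fq (E₁ × E₂), X ≤ V ∧
      z = (ρ₁ (X.map (LinearMap.fst Fq E₁ E₂)) : ℤ) + (ρ₂ (X.map (LinearMap.snd Fq E₁ E₂)) : ℤ)
            - (finrank Fq X : ℤ)}

/-- The set `𝒳` of nonzero subspaces `X` of `E₁ × E₂` with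
`ρ₁(π₁(X)) + ρ₂(π₂(X)) < dim X`. -/
def memX {Fq E₁ E₂ : Type*} [Field Fq]
    [AddCommGroup E₁] [Module Fq E₁] [AddCommGroup E₂] [Module Fq E₂]
    (ρ₁ : Submodule Fq E₁ → ℕ) (ρ₂ : Submodule Fq E₂ → ℕ)
    (X : Submodule Fq (E₁ × E₂)) : Prop :=
  X ≠ ⊥ ∧
    ρ₁ (X.map (LinearMap.fst Fq E₁ E₂)) + ρ₂ (X.map (LinearMap.snd Fq E₁ E₂)) < finrank Fq X

section Aux

variable {Fq E₁ E₂ : Type*} [Field Fq]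
    [AddCommGroup E₁] [Module Fq E₁] [FiniteDimensional Fq E₁]
    [AddCommGroup E₂] [Module Fq E₂] [FiniteDimensional Fq E₂]
    (ρ₁ : Submodule Fq E₁ → ℕ) (ρ₂ : Submodule Fq E₂ → ℕ)

/-- A subspace is dependent in the direct sum iff it contains an element of `𝒳`. -/
theorem dsRank_dep_iff (hb1 : ρ₁ ⊥ = 0) (hb2 : ρ₂ ⊥ = 0) (V : Submodule Fq (E₁ × E₂)) :
    dsRank ρ₁ ρ₂ V < (finrank Fq V : ℤ) ↔
      ∃ X : Submodule Fq (E₁ × E₂), X ≤ V ∧ memX ρ₁ ρ₂ X := by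
  set S := {z : ℤ | ∃ X : Submodule Fq (E₁ × E₂), X ≤ V ∧
      z = (ρ₁ (X.map (LinearMap.fst Fq E₁ E₂)) : ℤ) + (ρ₂ (X.map (LinearMap.snd Fq E₁ E₂)) : ℤ)
            - (finrank Fq X : ℤ)} with hS
  have h0 : (0:ℤ) ∈ S := ⟨⊥, bot_le, by simp [Submodule.map_bot, hb1, hb2]⟩
  have hbdd : BddBelow S := by
    refine ⟨-(finrank Fq V : ℤ), ?_⟩
    rintro z ⟨X, hX, rfl⟩
    have h3 : (finrank Fq X : ℤ) ≤ (finrank Fq V : ℤ) := by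
      exact_mod_cast Submodule.finrank_mono hX
    have h1 : (0:ℤ) ≤ (ρ₁ (X.map (LinearMap.fst Fq E₁ E₂)) : ℤ) := Int.ofNat_nonneg _
    have h2 : (0:ℤ) ≤ (ρ₂ (X.map (LinearMap.snd Fq E₁ E₂)) : ℤ) := Int.ofNat_nonneg _
    linarith
  have hrank : dsRank ρ₁ ρ₂ V = (finrank Fq V : ℤ) + sInf S := rfl
  constructor
  · intro h
    have hlt : sInf S < 0 := by linarith [hrank ▸ h]
    obtain ⟨X, hXV, hXz⟩ := Int.csInf_mem ⟨0, h0⟩ hbdd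
    rw [hXz] at hlt
    refine ⟨X, hXV, ?_, ?_⟩
    · rintro rfl
      simp [Submodule.map_bot, hb1, hb2] at hlt
    · have hc : (ρ₁ (X.map (LinearMap.fst Fq E₁ E₂)) : ℤ) +
          (ρ₂ (X.map (LinearMap.snd Fq E₁ E₂)) : ℤ) < (finrank Fq X : ℤ) := by linarith
      exact_mod_cast hc
  · rintro ⟨X, hXV, _, hXlt⟩
    have hz : ((ρ₁ (X.map (LinearMap.fst Fq E₁ E₂)) : ℤ) +
        (ρ₂ (X.map (LinearMap.snd Fq E₁ E₂)) : ℤ) - (finrank Fq X : ℤ)) ∈ S :=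
      ⟨X, hXV, rfl⟩
    have hneg : ((ρ₁ (X.map (LinearMap.fst Fq E₁ E₂)) : ℤ) +
        (ρ₂ (X.map (LinearMap.snd Fq E₁ E₂)) : ℤ) - (finrank Fq X : ℤ)) < 0 := by
      have : (ρ₁ (X.map (LinearMap.fst Fq E₁ E₂)) : ℤ) +
          (ρ₂ (X.map (LinearMap.snd Fq E₁ E₂)) : ℤ) < (finrank Fq X : ℤ) := by
        exact_mod_cast hXlt
      linarith
    have := csInf_le hbdd hz
    rw [hrank]; linarith

/-- `dsRank` is at most the dimension. -/
theorem dsRank_le (hb1 : ρ₁ ⊥ = 0) (hb2 : ρ₂ ⊥ = 0) (V : Submodule Fq (E₁ × E₂)) :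
    dsRank ρ₁ ρ₂ V ≤ (finrank Fq V : ℤ) := by
  have h0 : (0:ℤ) ∈ {z : ℤ | ∃ X : Submodule Fq (E₁ × E₂), X ≤ V ∧
      z = (ρ₁ (X.map (LinearMap.fst Fq E₁ E₂)) : ℤ) + (ρ₂ (X.map (LinearMap.snd Fq E₁ E₂)) : ℤ)
            - (finrank Fq X : ℤ)} := ⟨⊥, bot_le, by simp [Submodule.map_bot, hb1, hb2]⟩
  have hbdd : BddBelow {z : ℤ | ∃ X : Submodule Fq (E₁ × E₂), X ≤ V ∧
      z = (ρ₁ (X.map (LinearMap.fst Fq E₁ E₂)) : ℤ) + (ρ₂ (X.map (LinearMap.snd Fq E₁ E₂)) : ℤ)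
            - (finrank Fq X : ℤ)} := by
    refine ⟨-(finrank Fq V : ℤ), ?_⟩
    rintro z ⟨X, hX, rfl⟩
    have h3 : (finrank Fq X : ℤ) ≤ (finrank Fq V : ℤ) := by
      exact_mod_cast Submodule.finrank_mono hX
    have h1 : (0:ℤ) ≤ (ρ₁ (X.map (LinearMap.fst Fq E₁ E₂)) : ℤ) := Int.ofNat_nonneg _
    have h2 : (0:ℤ) ≤ (ρ₂ (X.map (LinearMap.snd Fq E₁ E₂)) : ℤ) := Int.ofNat_nonneg _
    linarith
  have := csInf_le hbdd h0
  unfold dsRank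
  linarith

end Aux

/-- The circuits of the direct sum `M₁ ⊕ M₂` (dependent spaces all of whose
proper subspaces are independent) are exactly the inclusion-minimal elements of `𝒳`. -/
theorem stmt8 (Fq E₁ E₂ : Type*) [Field Fq] [Fintype Fq]
    [AddCommGroup E₁] [Module Fq E₁] [FiniteDimensional Fq E₁]
    [AddCommGroup E₂] [Module Fq E₂] [FiniteDimensional Fq E₂]
    (ρ₁ : Submodule Fq E₁ → ℕ) (ρ₂ : Submodule Fq E₂ → ℕ)
    (hR1₁ : ∀ V : Submodule Fq E₁, ρ₁ V ≤ finrank Fq V)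
    (hR2₁ : ∀ V W : Submodule Fq E₁, V ≤ W → ρ₁ V ≤ ρ₁ W)
    (hR3₁ : ∀ V W : Submodule Fq E₁, ρ₁ (V ⊔ W) + ρ₁ (V ⊓ W) ≤ ρ₁ V + ρ₁ W)
    (hR1₂ : ∀ V : Submodule Fq E₂, ρ₂ V ≤ finrank Fq V)
    (hR2₂ : ∀ V W : Submodule Fq E₂, V ≤ W → ρ₂ V ≤ ρ₂ W)
    (hR3₂ : ∀ V W : Submodule Fq E₂, ρ₂ (V ⊔ W) + ρ₂ (V ⊓ W) ≤ ρ₂ V + ρ₂ W) :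
    ∀ C : Submodule Fq (E₁ × E₂),
      (dsRank ρ₁ ρ₂ C < (finrank Fq C : ℤ) ∧
        ∀ W : Submodule Fq (E₁ × E₂), W < C → dsRank ρ₁ ρ₂ W = (finrank Fq W : ℤ)) ↔
      (memX ρ₁ ρ₂ C ∧ ∀ X : Submodule Fq (E₁ × E₂), memX ρ₁ ρ₂ X → X ≤ C → X = C) := by
  have hb1 : ρ₁ ⊥ = 0 := Nat.le_zero.mp (by simpa using hR1₁ ⊥)
  have hb2 : ρ₂ ⊥ = 0 := Nat.le_zero.mp (by simpa using hR1₂ ⊥)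
  intro C
  constructor
  · rintro ⟨hdep, hmin⟩
    obtain ⟨X, hXC, hXmem⟩ := (dsRank_dep_iff ρ₁ ρ₂ hb1 hb2 C).mp hdep
    have hXeq : X = C := by
      rcases hXC.lt_or_eq with hlt | heq
      · exfalso
        have hWindep := hmin X hlt
        have : dsRank ρ₁ ρ₂ X < (finrank Fq X : ℤ) :=
          (dsRank_dep_iff ρ₁ ρ₂ hb1 hb2 X).mpr ⟨X, le_refl X, hXmem⟩
        omega
      · exact heq
    subst hXeq
    refine ⟨hXmem, ?_⟩
    intro X' hX'mem hX'C
    rcases hX'C.lt_or_eq with hlt | heq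
    · exfalso
      have hWindep := hmin X' hlt
      have : dsRank ρ₁ ρ₂ X' < (finrank Fq X' : ℤ) :=
        (dsRank_dep_iff ρ₁ ρ₂ hb1 hb2 X').mpr ⟨X', le_refl X', hX'mem⟩
      omega
    · exact heq
  · rintro ⟨hCmem, hmin⟩
    refine ⟨(dsRank_dep_iff ρ₁ ρ₂ hb1 hb2 C).mpr ⟨C, le_refl C, hCmem⟩, ?_⟩
    intro W hWC
    have hnot : ¬ dsRank ρ₁ ρ₂ W < (finrank Fq W : ℤ) := by
      intro h
      obtain ⟨X, hXW, hXmem⟩ := (dsRank_dep_iff ρ₁ ρ₂ hb1 hb2 W).mp h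
      have : X = C := hmin X hXmem (hXW.trans hWC.le)
      subst this
      exact absurd (hXW.trans_lt hWC) (lt_irrefl _)
    have := dsRank_le ρ₁ ρ₂ hb1 hb2 W
    omega
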